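/- Let B(t,x) be the mKdV breather with parameters α, β > 0 and shifts x₁, x₂, and let B̃(t,x) = 2√2 arctan((β/α) sin(αy₁)/cosh(βy₂)) be its primitive (so B = B̃_x). Define 𝓜 = (1/2)∫_{-∞}^x B². Then B satisfies the pointwise identity B_x² + (1/2)B⁴ + 2B B̃_t - 2𝓜_t = 0. -/

import Mathlib

set_option maxHeartbeats 1600000


open Real MeasureTheory

section mkdvAux

open Filter Topology Set

lemma mkdv_hasDerivAt_arctanG (a b : ℝ) (ha : 0 < a)
    (p q : ℝ → ℝ) (p' q' u : ℝ) (hp : HasDerivAt p p' u) (hq : HasDerivAt q q' u) :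
    HasDerivAt (fun v => 2 * Real.sqrt 2 *
        Real.arctan (b / a * Real.sin (a * p v) / Real.cosh (b * q v)))
      (2 * Real.sqrt 2 * a * b *
        (p' * (a * Real.cos (a * p u) * Real.cosh (b * q u)) -
          q' * (b * Real.sin (a * p u) * Real.sinh (b * q u))) /
        (a ^ 2 * Real.cosh (b * q u) ^ 2 + b ^ 2 * Real.sin (a * p u) ^ 2)) u := by
  have hc : (0:ℝ) < Real.cosh (b * q u) := Real.cosh_pos _
  have hsin : HasDerivAt (fun v => Real.sin (a * p v)) (Real.cos (a * p u) * (a * p')) u :=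
    (Real.hasDerivAt_sin _).comp u (hp.const_mul a)
  have hcosh : HasDerivAt (fun v => Real.cosh (b * q v)) (Real.sinh (b * q u) * (b * q')) u :=
    (Real.hasDerivAt_cosh _).comp u (hq.const_mul b)
  have hquot := ((hsin.const_mul (b / a)).div hcosh hc.ne')
  have harc := (Real.hasDerivAt_arctan _).comp u hquot
  have hfin := harc.const_mul (2 * Real.sqrt 2)
  refine hfin.congr_deriv ?_
  simp only [Pi.div_apply]
  have hG : (0:ℝ) < 1 + (b / a * Real.sin (a * p u) / Real.cosh (b * q u)) ^ 2 := by positivity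
  have hD : (0:ℝ) < a ^ 2 * Real.cosh (b * q u) ^ 2 + b ^ 2 * Real.sin (a * p u) ^ 2 := by
    positivity
  field_simp

lemma mkdv_hasDerivAt_Bexp (a b : ℝ) (ha : 0 < a)
    (p q : ℝ → ℝ) (p' q' u : ℝ) (hp : HasDerivAt p p' u) (hq : HasDerivAt q q' u) :
    HasDerivAt (fun v => 2 * Real.sqrt 2 * a * b *
        (a * Real.cos (a * p v) * Real.cosh (b * q v) -
          b * Real.sin (a * p v) * Real.sinh (b * q v)) /
        (a ^ 2 * Real.cosh (b * q v) ^ 2 + b ^ 2 * Real.sin (a * p v) ^ 2))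
      (2 * Real.sqrt 2 * a * b *
        ((-(p' * a ^ 2 * Real.sin (a * p u) * Real.cosh (b * q u)) +
            (q' - p') * (a * b * Real.cos (a * p u) * Real.sinh (b * q u)) -
            q' * b ^ 2 * Real.sin (a * p u) * Real.cosh (b * q u)) *
          (a ^ 2 * Real.cosh (b * q u) ^ 2 + b ^ 2 * Real.sin (a * p u) ^ 2) -
          (a * Real.cos (a * p u) * Real.cosh (b * q u) -
            b * Real.sin (a * p u) * Real.sinh (b * q u)) *
          (2 * a * b * (q' * (a * Real.cosh (b * q u) * Real.sinh (b * q u)) +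
            p' * (b * Real.sin (a * p u) * Real.cos (a * p u))))) /
        (a ^ 2 * Real.cosh (b * q u) ^ 2 + b ^ 2 * Real.sin (a * p u) ^ 2) ^ 2) u := by
  have hc : (0:ℝ) < Real.cosh (b * q u) := Real.cosh_pos _
  have hD : (0:ℝ) < a ^ 2 * Real.cosh (b * q u) ^ 2 + b ^ 2 * Real.sin (a * p u) ^ 2 := by
    positivity
  have hsin : HasDerivAt (fun v => Real.sin (a * p v)) (Real.cos (a * p u) * (a * p')) u :=
    (Real.hasDerivAt_sin _).comp u (hp.const_mul a)
  have hcos : HasDerivAt (fun v => Real.cos (a * p v)) (-Real.sin (a * p u) * (a * p')) u :=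
    (Real.hasDerivAt_cos _).comp u (hp.const_mul a)
  have hcosh : HasDerivAt (fun v => Real.cosh (b * q v)) (Real.sinh (b * q u) * (b * q')) u :=
    (Real.hasDerivAt_cosh _).comp u (hq.const_mul b)
  have hsinh : HasDerivAt (fun v => Real.sinh (b * q v)) (Real.cosh (b * q u) * (b * q')) u :=
    (Real.hasDerivAt_sinh _).comp u (hq.const_mul b)
  have hnum : HasDerivAt (fun v => a * Real.cos (a * p v) * Real.cosh (b * q v) -
      b * Real.sin (a * p v) * Real.sinh (b * q v))
      ((a * (-Real.sin (a * p u) * (a * p'))) * Real.cosh (b * q u) +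
        (a * Real.cos (a * p u)) * (Real.sinh (b * q u) * (b * q')) -
        ((b * (Real.cos (a * p u) * (a * p'))) * Real.sinh (b * q u) +
          (b * Real.sin (a * p u)) * (Real.cosh (b * q u) * (b * q')))) u :=
    ((hcos.const_mul a).mul hcosh).sub ((hsin.const_mul b).mul hsinh)
  have hden : HasDerivAt (fun v => a ^ 2 * Real.cosh (b * q v) ^ 2 +
      b ^ 2 * Real.sin (a * p v) ^ 2)
      (a ^ 2 * (2 * Real.cosh (b * q u) * (Real.sinh (b * q u) * (b * q'))) +
        b ^ 2 * (2 * Real.sin (a * p u) * (Real.cos (a * p u) * (a * p')))) u := by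
    have h1 := hcosh.pow 2
    have h2 := hsin.pow 2
    have h3 := (h1.const_mul (a ^ 2)).add (h2.const_mul (b ^ 2))
    refine h3.congr_deriv ?_
    norm_num
  have hdiv := (hnum.div hden hD.ne').const_mul (2 * Real.sqrt 2 * a * b)
  convert hdiv using 1
  · rfl
  · rfl
  · funext v; simp only [Pi.div_apply]; ring
  field_simp
  ring

lemma mkdv_hasDerivAt_Phi (a b : ℝ) (ha : 0 < a)
    (p q : ℝ → ℝ) (p' q' u : ℝ) (hp : HasDerivAt p p' u) (hq : HasDerivAt q q' u) :
    HasDerivAt (fun v => 4 * a * b *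
        (a * Real.cosh (b * q v) * Real.sinh (b * q v) +
          b * Real.sin (a * p v) * Real.cos (a * p v)) /
        (a ^ 2 * Real.cosh (b * q v) ^ 2 + b ^ 2 * Real.sin (a * p v) ^ 2) + 4 * b)
      (4 * a ^ 2 * b ^ 2 *
        ((q' * (Real.sinh (b * q u) ^ 2 + Real.cosh (b * q u) ^ 2) +
            p' * (Real.cos (a * p u) ^ 2 - Real.sin (a * p u) ^ 2)) *
          (a ^ 2 * Real.cosh (b * q u) ^ 2 + b ^ 2 * Real.sin (a * p u) ^ 2) -
          2 * (a * Real.cosh (b * q u) * Real.sinh (b * q u) +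
            b * Real.sin (a * p u) * Real.cos (a * p u)) *
          (q' * (a * Real.cosh (b * q u) * Real.sinh (b * q u)) +
            p' * (b * Real.sin (a * p u) * Real.cos (a * p u)))) /
        (a ^ 2 * Real.cosh (b * q u) ^ 2 + b ^ 2 * Real.sin (a * p u) ^ 2) ^ 2) u := by
  have hc : (0:ℝ) < Real.cosh (b * q u) := Real.cosh_pos _
  have hD : (0:ℝ) < a ^ 2 * Real.cosh (b * q u) ^ 2 + b ^ 2 * Real.sin (a * p u) ^ 2 := by
    positivity
  have hsin : HasDerivAt (fun v => Real.sin (a * p v)) (Real.cos (a * p u) * (a * p')) u :=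
    (Real.hasDerivAt_sin _).comp u (hp.const_mul a)
  have hcos : HasDerivAt (fun v => Real.cos (a * p v)) (-Real.sin (a * p u) * (a * p')) u :=
    (Real.hasDerivAt_cos _).comp u (hp.const_mul a)
  have hcosh : HasDerivAt (fun v => Real.cosh (b * q v)) (Real.sinh (b * q u) * (b * q')) u :=
    (Real.hasDerivAt_cosh _).comp u (hq.const_mul b)
  have hsinh : HasDerivAt (fun v => Real.sinh (b * q v)) (Real.cosh (b * q u) * (b * q')) u :=
    (Real.hasDerivAt_sinh _).comp u (hq.const_mul b)
  have hnum : HasDerivAt (fun v => a * Real.cosh (b * q v) * Real.sinh (b * q v) +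
      b * Real.sin (a * p v) * Real.cos (a * p v))
      ((a * (Real.sinh (b * q u) * (b * q'))) * Real.sinh (b * q u) +
        (a * Real.cosh (b * q u)) * (Real.cosh (b * q u) * (b * q')) +
        ((b * (Real.cos (a * p u) * (a * p'))) * Real.cos (a * p u) +
          (b * Real.sin (a * p u)) * (-Real.sin (a * p u) * (a * p')))) u :=
    ((hcosh.const_mul a).mul hsinh).add ((hsin.const_mul b).mul hcos)
  have hden : HasDerivAt (fun v => a ^ 2 * Real.cosh (b * q v) ^ 2 +
      b ^ 2 * Real.sin (a * p v) ^ 2)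
      (a ^ 2 * (2 * Real.cosh (b * q u) ^ 1 * (Real.sinh (b * q u) * (b * q'))) +
        b ^ 2 * (2 * Real.sin (a * p u) ^ 1 * (Real.cos (a * p u) * (a * p')))) u := by
    have h3 := ((hcosh.pow 2).const_mul (a ^ 2)).add ((hsin.pow 2).const_mul (b ^ 2))
    refine h3.congr_deriv ?_
    norm_num
  have hdiv := ((hnum.div hden hD.ne').const_mul (4 * a * b)).add_const (4 * b)
  convert hdiv using 1
  · rfl
  · rfl
  · funext v; simp only [Pi.div_apply]; ring
  field_simp
  ring

lemma mkdv_cosh_exp_le_one {w : ℝ} (hw : w ≤ 0) : Real.cosh w * Real.exp w ≤ 1 := by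
  rw [Real.cosh_eq, Real.exp_neg]
  have hp := Real.exp_pos w
  have h1 : Real.exp w ≤ 1 := Real.exp_le_one_iff.2 hw
  rw [div_mul_eq_mul_div, div_le_one (by norm_num)]
  have h2 : (Real.exp w + (Real.exp w)⁻¹) * Real.exp w = Real.exp w ^ 2 + 1 := by
    field_simp
  nlinarith

lemma mkdv_tendsto_cosh_atBot (b e2 : ℝ) (hb : 0 < b) :
    Tendsto (fun s : ℝ => Real.cosh (b * (s + e2))) atBot atTop := by
  have h1 : Tendsto (fun s : ℝ => b * (s + e2)) atBot atBot :=
    (tendsto_atBot_add_const_right atBot e2 tendsto_id).const_mul_atBot hb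
  have h2 : Tendsto (fun s : ℝ => -(b * (s + e2))) atBot atTop :=
    tendsto_neg_atBot_atTop.comp h1
  have h3 : Tendsto (fun s : ℝ => Real.exp (-(b * (s + e2))) / 2) atBot atTop :=
    (Real.tendsto_exp_atTop.comp h2).atTop_div_const (by norm_num)
  refine tendsto_atTop_mono (fun s => ?_) h3
  rw [Real.cosh_eq]
  have := (Real.exp_pos (b * (s + e2))).le
  gcongr
  linarith

lemma mkdv_tendsto_Phi_atBot (a b e1 e2 : ℝ) (ha : 0 < a) (hb : 0 < b) :
    Tendsto (fun s : ℝ => 4 * a * b *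
      (a * Real.cosh (b * (s + e2)) * Real.sinh (b * (s + e2)) +
        b * Real.sin (a * (s + e1)) * Real.cos (a * (s + e1))) /
      (a ^ 2 * Real.cosh (b * (s + e2)) ^ 2 + b ^ 2 * Real.sin (a * (s + e1)) ^ 2) + 4 * b)
      atBot (𝓝 0) := by
  set K : ℝ := 4 * b * (a ^ 2 + a * b + b ^ 2) with hK
  have hKpos : 0 < K := by positivity
  have hlim : Tendsto (fun s : ℝ => K / (a ^ 2 * Real.cosh (b * (s + e2)))) atBot (𝓝 0) :=
    tendsto_const_nhds.div_atTop
      ((mkdv_tendsto_cosh_atBot b e2 hb).const_mul_atTop (by positivity))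
  have habs : ∀ᶠ s in atBot, |4 * a * b *
      (a * Real.cosh (b * (s + e2)) * Real.sinh (b * (s + e2)) +
        b * Real.sin (a * (s + e1)) * Real.cos (a * (s + e1))) /
      (a ^ 2 * Real.cosh (b * (s + e2)) ^ 2 + b ^ 2 * Real.sin (a * (s + e1)) ^ 2) + 4 * b|
      ≤ K / (a ^ 2 * Real.cosh (b * (s + e2))) := by
    filter_upwards [eventually_le_atBot (-e2)] with s hs
    have hw : b * (s + e2) ≤ 0 := by
      have : s + e2 ≤ 0 := by linarith
      exact mul_nonpos_of_nonneg_of_nonpos hb.le this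
    set H := Real.cosh (b * (s + e2)) with hH
    set Z := Real.sinh (b * (s + e2)) with hZ
    set S := Real.sin (a * (s + e1)) with hS
    set C := Real.cos (a * (s + e1)) with hC
    have hHpos : 0 < H := Real.cosh_pos _
    have hH1 : 1 ≤ H := Real.one_le_cosh _
    have hDpos : 0 < a ^ 2 * H ^ 2 + b ^ 2 * S ^ 2 := by positivity
    have hform : 4 * a * b * (a * H * Z + b * S * C) /
        (a ^ 2 * H ^ 2 + b ^ 2 * S ^ 2) + 4 * b
        = 4 * b * (a ^ 2 * (H * Real.exp (b * (s + e2))) + a * b * (S * C) + b ^ 2 * S ^ 2) /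
          (a ^ 2 * H ^ 2 + b ^ 2 * S ^ 2) := by
      rw [← Real.cosh_add_sinh, ← hH, ← hZ]
      field_simp
      ring
    rw [hform, abs_div, abs_of_pos hDpos]
    have hce : H * Real.exp (b * (s + e2)) ≤ 1 := mkdv_cosh_exp_le_one hw
    have hce0 : 0 ≤ H * Real.exp (b * (s + e2)) := by positivity
    have hnum : |4 * b * (a ^ 2 * (H * Real.exp (b * (s + e2))) + a * b * (S * C) +
        b ^ 2 * S ^ 2)| ≤ K := by
      rw [abs_le]
      have hSsq : S ^ 2 ≤ 1 := by rw [hS]; exact Real.sin_sq_le_one _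
      have hCsq : C ^ 2 ≤ 1 := by rw [hC]; exact Real.cos_sq_le_one _
      have h1 : a ^ 2 * (H * Real.exp (b * (s + e2))) ≤ a ^ 2 := by nlinarith [sq_nonneg a]
      have h0 : 0 ≤ a ^ 2 * (H * Real.exp (b * (s + e2))) := by positivity
      have h2 : a * b * (S * C) ≤ a * b := by nlinarith [mul_pos ha hb, sq_nonneg (S - C)]
      have h2' : -(a * b) ≤ a * b * (S * C) := by nlinarith [mul_pos ha hb, sq_nonneg (S + C)]
      have h3 : b ^ 2 * S ^ 2 ≤ b ^ 2 := by nlinarith [sq_nonneg b]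
      have h3' : 0 ≤ b ^ 2 * S ^ 2 := by positivity
      have hT1 : -(a ^ 2 + a * b + b ^ 2) ≤ a ^ 2 * (H * Real.exp (b * (s + e2))) +
          a * b * (S * C) + b ^ 2 * S ^ 2 := by nlinarith [sq_nonneg a, sq_nonneg b]
      have hT2 : a ^ 2 * (H * Real.exp (b * (s + e2))) + a * b * (S * C) + b ^ 2 * S ^ 2 ≤
          a ^ 2 + a * b + b ^ 2 := by linarith
      constructor
      · calc -K = 4 * b * (-(a ^ 2 + a * b + b ^ 2)) := by rw [hK]; ring
          _ ≤ _ := by apply mul_le_mul_of_nonneg_left hT1 (by positivity)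
      · calc 4 * b * (a ^ 2 * (H * Real.exp (b * (s + e2))) + a * b * (S * C) + b ^ 2 * S ^ 2)
            ≤ 4 * b * (a ^ 2 + a * b + b ^ 2) := by
              apply mul_le_mul_of_nonneg_left hT2 (by positivity)
          _ = K := by rw [hK]
    have hden : a ^ 2 * H ≤ a ^ 2 * H ^ 2 + b ^ 2 * S ^ 2 := by nlinarith
    calc |4 * b * (a ^ 2 * (H * Real.exp (b * (s + e2))) + a * b * (S * C) + b ^ 2 * S ^ 2)| /
          (a ^ 2 * H ^ 2 + b ^ 2 * S ^ 2)
        ≤ K / (a ^ 2 * H) := div_le_div₀ hKpos.le hnum (by positivity) hden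
      _ = K / (a ^ 2 * Real.cosh (b * (s + e2))) := by rw [hH]
  have hneg : Tendsto (fun s : ℝ => -(K / (a ^ 2 * Real.cosh (b * (s + e2))))) atBot (𝓝 0) := by
    have h := hlim.neg
    rwa [neg_zero] at h
  refine tendsto_of_tendsto_of_tendsto_of_le_of_le' hneg hlim ?_ ?_
  · filter_upwards [habs] with s hs using neg_le_of_abs_le hs
  · filter_upwards [habs] with s hs using le_of_abs_le hs

lemma mkdv_combine4 (n1 n2 n3 n4 D : ℝ) (hD : D ≠ 0)
    (h : n1 ^ 2 + 1 / 2 * n2 ^ 4 + 2 * n2 * n3 * D ^ 2 - 2 * n4 * D ^ 2 = 0) :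
    (n1 / D ^ 2) ^ 2 + 1 / 2 * (n2 / D) ^ 4 + 2 * (n2 / D) * (n3 / D) - 2 * (n4 / D ^ 2) = 0 := by
  have hD4 : D ^ 4 ≠ 0 := pow_ne_zero _ hD
  have e : (n1 / D ^ 2) ^ 2 + 1 / 2 * (n2 / D) ^ 4 + 2 * (n2 / D) * (n3 / D) - 2 * (n4 / D ^ 2)
      = (n1 ^ 2 + 1 / 2 * n2 ^ 4 + 2 * n2 * n3 * D ^ 2 - 2 * n4 * D ^ 2) / D ^ 4 := by
    field_simp
  rw [e, h, zero_div]

lemma mkdv_final_algebra (a b d g r S C H Z : ℝ)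
    (hd : d = a ^ 2 - 3 * b ^ 2) (hg : g = 3 * a ^ 2 - b ^ 2) (hr : r ^ 2 = 2)
    (h1 : S ^ 2 + C ^ 2 = 1) (h2 : H ^ 2 - Z ^ 2 = 1)
    (hD : a ^ 2 * H ^ 2 + b ^ 2 * S ^ 2 ≠ 0) :
    (2 * r * a * b * ((-((a ^ 2 + b ^ 2) * S * H)) * (a ^ 2 * H ^ 2 + b ^ 2 * S ^ 2) -
        2 * a * b * (a * C * H - b * S * Z) * (a * H * Z + b * S * C)) /
        (a ^ 2 * H ^ 2 + b ^ 2 * S ^ 2) ^ 2) ^ 2 +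
      1 / 2 * (2 * r * a * b * (a * C * H - b * S * Z) / (a ^ 2 * H ^ 2 + b ^ 2 * S ^ 2)) ^ 4 +
      2 * (2 * r * a * b * (a * C * H - b * S * Z) / (a ^ 2 * H ^ 2 + b ^ 2 * S ^ 2)) *
        (2 * r * a * b * (d * (a * C * H) - g * (b * S * Z)) /
          (a ^ 2 * H ^ 2 + b ^ 2 * S ^ 2)) -
      2 * (2 * a ^ 2 * b ^ 2 * ((g * (Z ^ 2 + H ^ 2) + d * (C ^ 2 - S ^ 2)) *
          (a ^ 2 * H ^ 2 + b ^ 2 * S ^ 2) -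
          2 * (a * H * Z + b * S * C) * (g * (a * H * Z) + d * (b * S * C))) /
        (a ^ 2 * H ^ 2 + b ^ 2 * S ^ 2) ^ 2) = 0 := by
  subst hd hg
  apply mkdv_combine4 _ _ _ _ _ hD
  linear_combination
    ((-12)*a^2*b^10*S^6 + (32)*a^4*b^8*S^4*Z^2 + (-28)*a^4*b^8*S^4*H^2 + (4)*a^4*b^8*S^6 + (-64)*a^5*b^7*S^3*C*H*Z + (32)*a^6*b^6*S^2*H^2 + (64)*a^6*b^6*S^2*H^2*Z^2 + (-52)*a^6*b^6*S^2*H^4 + (32)*a^6*b^6*S^2*C^2*H^2 + (20)*a^6*b^6*S^4*H^2 + (-64)*a^7*b^5*S*C*H^3*Z + (32)*a^8*b^4*H^4 + (32)*a^8*b^4*H^4*Z^2 + (-36)*a^8*b^4*H^6 + (32)*a^8*b^4*C^2*H^4 + (28)*a^8*b^4*S^2*H^4 + (12)*a^10*b^2*H^6) * h1 +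
    ((12)*a^2*b^10*S^6 + (-32)*a^4*b^8*S^4*Z^2 + (28)*a^4*b^8*S^4*H^2 + (-4)*a^4*b^8*S^6 + (64)*a^5*b^7*S^3*C*H*Z + (-32)*a^6*b^6*S^2*H^2 + (-32)*a^6*b^6*S^2*H^2*Z^2 + (20)*a^6*b^6*S^2*H^4 + (12)*a^6*b^6*S^4*H^2 + (64)*a^7*b^5*S*C*H^3*Z + (-32)*a^8*b^4*H^4 + (4)*a^8*b^4*H^6 + (4)*a^8*b^4*S^2*H^4 + (-12)*a^10*b^2*H^6) * h2 +
    (4*a^2*b^2*((-((a^2+b^2)*S*H))*(a^2*H^2+b^2*S^2) - 2*a*b*(a*C*H-b*S*Z)*(a*H*Z+b*S*C))^2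
      + 8*a^4*b^4*(r^2+2)*(a*C*H-b*S*Z)^4
      + 8*a^2*b^2*(a*C*H-b*S*Z)*((a^2-3*b^2)*(a*C*H)-(3*a^2-b^2)*(b*S*Z))*(a^2*H^2+b^2*S^2)^2) * hr

lemma mkdv_mass_integral (a b dd gg tt x1 x2 x : ℝ) (ha : 0 < a) (hb : 0 < b) :
    (∫ s in Set.Iio x, (2 * Real.sqrt 2 * a * b *
        (a * Real.cos (a * (s + dd * tt + x1)) * Real.cosh (b * (s + gg * tt + x2)) -
          b * Real.sin (a * (s + dd * tt + x1)) * Real.sinh (b * (s + gg * tt + x2))) /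
        (a ^ 2 * Real.cosh (b * (s + gg * tt + x2)) ^ 2 +
          b ^ 2 * Real.sin (a * (s + dd * tt + x1)) ^ 2)) ^ 2)
    = 4 * a * b *
        (a * Real.cosh (b * (x + gg * tt + x2)) * Real.sinh (b * (x + gg * tt + x2)) +
          b * Real.sin (a * (x + dd * tt + x1)) * Real.cos (a * (x + dd * tt + x1))) /
        (a ^ 2 * Real.cosh (b * (x + gg * tt + x2)) ^ 2 +
          b ^ 2 * Real.sin (a * (x + dd * tt + x1)) ^ 2) + 4 * b := by
  set Bsq : ℝ → ℝ := fun s => (2 * Real.sqrt 2 * a * b *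
        (a * Real.cos (a * (s + dd * tt + x1)) * Real.cosh (b * (s + gg * tt + x2)) -
          b * Real.sin (a * (s + dd * tt + x1)) * Real.sinh (b * (s + gg * tt + x2))) /
        (a ^ 2 * Real.cosh (b * (s + gg * tt + x2)) ^ 2 +
          b ^ 2 * Real.sin (a * (s + dd * tt + x1)) ^ 2)) ^ 2
    with hBsq
  set Phi : ℝ → ℝ := fun s => 4 * a * b *
      (a * Real.cosh (b * (s + gg * tt + x2)) * Real.sinh (b * (s + gg * tt + x2)) +
        b * Real.sin (a * (s + dd * tt + x1)) * Real.cos (a * (s + dd * tt + x1))) /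
      (a ^ 2 * Real.cosh (b * (s + gg * tt + x2)) ^ 2 +
        b ^ 2 * Real.sin (a * (s + dd * tt + x1)) ^ 2) + 4 * b
    with hPhi
  have hr : Real.sqrt 2 ^ 2 = 2 := Real.sq_sqrt (by norm_num)
  have hderiv : ∀ s : ℝ, HasDerivAt Phi (Bsq s) s := by
    intro s
    have hp : HasDerivAt (fun v : ℝ => v + dd * tt + x1) 1 s :=
      ((hasDerivAt_id s).add_const (dd * tt)).add_const x1
    have hq : HasDerivAt (fun v : ℝ => v + gg * tt + x2) 1 s :=
      ((hasDerivAt_id s).add_const (gg * tt)).add_const x2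
    have h := mkdv_hasDerivAt_Phi a b ha (fun v => v + dd * tt + x1)
      (fun v => v + gg * tt + x2) 1 1 s hp hq
    convert h using 1
    simp only [hBsq]
    rw [div_pow]
    have h1 : Real.sin (a * (s + dd * tt + x1)) ^ 2 + Real.cos (a * (s + dd * tt + x1)) ^ 2 = 1 :=
      Real.sin_sq_add_cos_sq _
    have h2 : Real.cosh (b * (s + gg * tt + x2)) ^ 2 -
        Real.sinh (b * (s + gg * tt + x2)) ^ 2 = 1 := Real.cosh_sq_sub_sinh_sq _
    set S := Real.sin (a * (s + dd * tt + x1))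
    set C := Real.cos (a * (s + dd * tt + x1))
    set H := Real.cosh (b * (s + gg * tt + x2))
    set Z := Real.sinh (b * (s + gg * tt + x2))
    linear_combination
      (4 * a ^ 2 * b ^ 2 * (a ^ 2 * H ^ 2 + b ^ 2 * S ^ 2) /
        (a ^ 2 * H ^ 2 + b ^ 2 * S ^ 2) ^ 2) * h1 -
      (4 * a ^ 2 * b ^ 2 * (a ^ 2 * H ^ 2 + b ^ 2 * S ^ 2) /
        (a ^ 2 * H ^ 2 + b ^ 2 * S ^ 2) ^ 2) * h2 +
      (4 * a ^ 2 * b ^ 2 * (a * C * H - b * S * Z) ^ 2 /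
        (a ^ 2 * H ^ 2 + b ^ 2 * S ^ 2) ^ 2) * hr
  have htend : Tendsto Phi atBot (𝓝 0) := by
    have h := mkdv_tendsto_Phi_atBot a b (dd * tt + x1) (gg * tt + x2) ha hb
    simpa only [← add_assoc] using h
  have hgderiv : ∀ u ∈ Set.Ici (-x), HasDerivAt (fun u => -Phi (-u)) (Bsq (-u)) u := by
    intro u _
    have h := ((hderiv (-u)).comp u (hasDerivAt_neg u)).neg
    exact h.congr_deriv (by ring)
  have hgpos : ∀ u ∈ Set.Ioi (-x), 0 ≤ Bsq (-u) := fun u _ => by rw [hBsq]; positivity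
  have hgt : Tendsto (fun u => -Phi (-u)) atTop (𝓝 0) := by
    have h := (htend.comp tendsto_neg_atTop_atBot).neg
    simpa using h
  have key := integral_Ioi_of_hasDerivAt_of_nonneg' hgderiv hgpos hgt
  have refl2 : (∫ u in Set.Ioi (-x), Bsq (-u)) = ∫ s in Set.Iic x, Bsq s := by
    simpa using integral_comp_neg_Ioi (-x) Bsq
  calc (∫ s in Set.Iio x, Bsq s) = ∫ s in Set.Iic x, Bsq s :=
        (MeasureTheory.integral_Iic_eq_integral_Iio).symm
    _ = ∫ u in Set.Ioi (-x), Bsq (-u) := refl2.symm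
    _ = 0 - -Phi (-(-x)) := key
    _ = Phi x := by rw [neg_neg]; ring

end mkdvAux

/-- Pointwise identity for the mKdV breather: `B_x² + (1/2)B⁴ + 2B B̃_t - 2𝓜_t = 0`,
where `B̃` is the primitive of `B` and `𝓜 = (1/2)∫_{-∞}^x B²`. -/
theorem mKdV_breather_pointwise_identity (α β x₁ x₂ : ℝ) (hα : 0 < α) (hβ : 0 < β)
    (δ γ : ℝ) (hδ : δ = α ^ 2 - 3 * β ^ 2) (hγ : γ = 3 * α ^ 2 - β ^ 2)
    (Btilde B M : ℝ → ℝ → ℝ)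
    (hBtilde : ∀ t x : ℝ, Btilde t x = 2 * Real.sqrt 2 *
      Real.arctan ((β / α) * Real.sin (α * (x + δ * t + x₁)) /
        Real.cosh (β * (x + γ * t + x₂))))
    (hB : ∀ t x : ℝ, B t x = deriv (Btilde t) x)
    (hM : ∀ t x : ℝ, M t x = (1 / 2) * ∫ s in Set.Iio x, (B t s) ^ 2) :
    ∀ t x : ℝ,
      (deriv (B t) x) ^ 2 + (1 / 2) * (B t x) ^ 4 +
        2 * B t x * deriv (fun t' : ℝ => Btilde t' x) t -
        2 * deriv (fun t' : ℝ => M t' x) t = 0 := by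
  intro t x
  have hr : Real.sqrt 2 ^ 2 = 2 := Real.sq_sqrt (by norm_num)
  -- explicit formula for B
  have hBex : ∀ t' x' : ℝ, B t' x' = 2 * Real.sqrt 2 * α * β *
      (α * Real.cos (α * (x' + δ * t' + x₁)) * Real.cosh (β * (x' + γ * t' + x₂)) -
        β * Real.sin (α * (x' + δ * t' + x₁)) * Real.sinh (β * (x' + γ * t' + x₂))) /
      (α ^ 2 * Real.cosh (β * (x' + γ * t' + x₂)) ^ 2 +
        β ^ 2 * Real.sin (α * (x' + δ * t' + x₁)) ^ 2) := by
    intro t' x'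
    rw [hB]
    have hfun : Btilde t' = fun x'' => 2 * Real.sqrt 2 *
        Real.arctan (β / α * Real.sin (α * (x'' + δ * t' + x₁)) /
          Real.cosh (β * (x'' + γ * t' + x₂))) := funext fun x'' => hBtilde t' x''
    rw [hfun]
    have hp : HasDerivAt (fun v : ℝ => v + δ * t' + x₁) 1 x' :=
      ((hasDerivAt_id x').add_const (δ * t')).add_const x₁
    have hq : HasDerivAt (fun v : ℝ => v + γ * t' + x₂) 1 x' :=
      ((hasDerivAt_id x').add_const (γ * t')).add_const x₂
    rw [(mkdv_hasDerivAt_arctanG α β hα (fun v => v + δ * t' + x₁)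
      (fun v => v + γ * t' + x₂) 1 1 x' hp hq).deriv]
    ring
  -- x-derivative of B
  have hBxval : deriv (B t) x = 2 * Real.sqrt 2 * α * β *
      ((-((α ^ 2 + β ^ 2) * Real.sin (α * (x + δ * t + x₁)) * Real.cosh (β * (x + γ * t + x₂)))) *
        (α ^ 2 * Real.cosh (β * (x + γ * t + x₂)) ^ 2 +
          β ^ 2 * Real.sin (α * (x + δ * t + x₁)) ^ 2) -
        2 * α * β * (α * Real.cos (α * (x + δ * t + x₁)) * Real.cosh (β * (x + γ * t + x₂)) -
          β * Real.sin (α * (x + δ * t + x₁)) * Real.sinh (β * (x + γ * t + x₂))) *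
        (α * Real.cosh (β * (x + γ * t + x₂)) * Real.sinh (β * (x + γ * t + x₂)) +
          β * Real.sin (α * (x + δ * t + x₁)) * Real.cos (α * (x + δ * t + x₁)))) /
      (α ^ 2 * Real.cosh (β * (x + γ * t + x₂)) ^ 2 +
        β ^ 2 * Real.sin (α * (x + δ * t + x₁)) ^ 2) ^ 2 := by
    have hfunB : B t = fun x' => 2 * Real.sqrt 2 * α * β *
        (α * Real.cos (α * (x' + δ * t + x₁)) * Real.cosh (β * (x' + γ * t + x₂)) -
          β * Real.sin (α * (x' + δ * t + x₁)) * Real.sinh (β * (x' + γ * t + x₂))) /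
        (α ^ 2 * Real.cosh (β * (x' + γ * t + x₂)) ^ 2 +
          β ^ 2 * Real.sin (α * (x' + δ * t + x₁)) ^ 2) := funext fun x' => hBex t x'
    rw [hfunB]
    have hp : HasDerivAt (fun v : ℝ => v + δ * t + x₁) 1 x :=
      ((hasDerivAt_id x).add_const (δ * t)).add_const x₁
    have hq : HasDerivAt (fun v : ℝ => v + γ * t + x₂) 1 x :=
      ((hasDerivAt_id x).add_const (γ * t)).add_const x₂
    rw [(mkdv_hasDerivAt_Bexp α β hα (fun v => v + δ * t + x₁)
      (fun v => v + γ * t + x₂) 1 1 x hp hq).deriv]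
    ring
  -- t-derivative of Btilde
  have hBttval : deriv (fun t' : ℝ => Btilde t' x) t = 2 * Real.sqrt 2 * α * β *
      (δ * (α * Real.cos (α * (x + δ * t + x₁)) * Real.cosh (β * (x + γ * t + x₂))) -
        γ * (β * Real.sin (α * (x + δ * t + x₁)) * Real.sinh (β * (x + γ * t + x₂)))) /
      (α ^ 2 * Real.cosh (β * (x + γ * t + x₂)) ^ 2 +
        β ^ 2 * Real.sin (α * (x + δ * t + x₁)) ^ 2) := by
    have hfun : (fun t' : ℝ => Btilde t' x) = fun t' => 2 * Real.sqrt 2 *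
        Real.arctan (β / α * Real.sin (α * (x + δ * t' + x₁)) /
          Real.cosh (β * (x + γ * t' + x₂))) := funext fun t' => hBtilde t' x
    rw [hfun]
    have hp : HasDerivAt (fun t' : ℝ => x + δ * t' + x₁) δ t := by
      simpa using (((hasDerivAt_id t).const_mul δ).const_add x).add_const x₁
    have hq : HasDerivAt (fun t' : ℝ => x + γ * t' + x₂) γ t := by
      simpa using (((hasDerivAt_id t).const_mul γ).const_add x).add_const x₂
    rw [(mkdv_hasDerivAt_arctanG α β hα (fun t' => x + δ * t' + x₁)
      (fun t' => x + γ * t' + x₂) δ γ t hp hq).deriv]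
  -- t-derivative of M
  have hMtval : deriv (fun t' : ℝ => M t' x) t = 2 * α ^ 2 * β ^ 2 *
      ((γ * (Real.sinh (β * (x + γ * t + x₂)) ^ 2 + Real.cosh (β * (x + γ * t + x₂)) ^ 2) +
          δ * (Real.cos (α * (x + δ * t + x₁)) ^ 2 - Real.sin (α * (x + δ * t + x₁)) ^ 2)) *
        (α ^ 2 * Real.cosh (β * (x + γ * t + x₂)) ^ 2 +
          β ^ 2 * Real.sin (α * (x + δ * t + x₁)) ^ 2) -
        2 * (α * Real.cosh (β * (x + γ * t + x₂)) * Real.sinh (β * (x + γ * t + x₂)) +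
          β * Real.sin (α * (x + δ * t + x₁)) * Real.cos (α * (x + δ * t + x₁))) *
        (γ * (α * Real.cosh (β * (x + γ * t + x₂)) * Real.sinh (β * (x + γ * t + x₂))) +
          δ * (β * Real.sin (α * (x + δ * t + x₁)) * Real.cos (α * (x + δ * t + x₁))))) /
      (α ^ 2 * Real.cosh (β * (x + γ * t + x₂)) ^ 2 +
        β ^ 2 * Real.sin (α * (x + δ * t + x₁)) ^ 2) ^ 2 := by
    have hMfun : (fun t' : ℝ => M t' x) = fun t' => (1 / 2) * (4 * α * β *
        (α * Real.cosh (β * (x + γ * t' + x₂)) * Real.sinh (β * (x + γ * t' + x₂)) +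
          β * Real.sin (α * (x + δ * t' + x₁)) * Real.cos (α * (x + δ * t' + x₁))) /
        (α ^ 2 * Real.cosh (β * (x + γ * t' + x₂)) ^ 2 +
          β ^ 2 * Real.sin (α * (x + δ * t' + x₁)) ^ 2) + 4 * β) := by
      funext t'
      rw [hM]
      congr 1
      have hint : (∫ s in Set.Iio x, B t' s ^ 2) = ∫ s in Set.Iio x,
          (2 * Real.sqrt 2 * α * β *
            (α * Real.cos (α * (s + δ * t' + x₁)) * Real.cosh (β * (s + γ * t' + x₂)) -
              β * Real.sin (α * (s + δ * t' + x₁)) * Real.sinh (β * (s + γ * t' + x₂))) /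
            (α ^ 2 * Real.cosh (β * (s + γ * t' + x₂)) ^ 2 +
              β ^ 2 * Real.sin (α * (s + δ * t' + x₁)) ^ 2)) ^ 2 := by
        simp only [hBex]
      rw [hint, mkdv_mass_integral α β δ γ t' x₁ x₂ x hα hβ]
    rw [hMfun]
    have hp : HasDerivAt (fun t' : ℝ => x + δ * t' + x₁) δ t := by
      simpa using (((hasDerivAt_id t).const_mul δ).const_add x).add_const x₁
    have hq : HasDerivAt (fun t' : ℝ => x + γ * t' + x₂) γ t := by
      simpa using (((hasDerivAt_id t).const_mul γ).const_add x).add_const x₂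
    rw [((mkdv_hasDerivAt_Phi α β hα (fun t' => x + δ * t' + x₁)
      (fun t' => x + γ * t' + x₂) δ γ t hp hq).const_mul (1 / 2 : ℝ)).deriv]
    ring
  rw [hBxval, hBex t x, hBttval, hMtval]
  have hD : α ^ 2 * Real.cosh (β * (x + γ * t + x₂)) ^ 2 +
      β ^ 2 * Real.sin (α * (x + δ * t + x₁)) ^ 2 ≠ 0 := by positivity
  exact mkdv_final_algebra α β δ γ (Real.sqrt 2)
    (Real.sin (α * (x + δ * t + x₁))) (Real.cos (α * (x + δ * t + x₁)))
    (Real.cosh (β * (x + γ * t + x₂))) (Real.sinh (β * (x + γ * t + x₂)))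
    hδ hγ hr (Real.sin_sq_add_cos_sq _) (Real.cosh_sq_sub_sinh_sq _) hD
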